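/- For every integer d ≥ 1, the characteristic polynomial of the bricklayer's graph G_{2^d+1} evaluated at d satisfies χ_{2^d+1}(d) = −d! · ∏_{i=1}^{d−1} (2i)^{binom(d,i) − 1}. -/

import Mathlib

/-- The bricklayer's graph `G_n`: vertices `0, …, n-1`, adjacent iff their binary
expansions differ in exactly one bit (i.e. their XOR is a power of two). -/
def bricklayerGraph (n : ℕ) : SimpleGraph (Fin n) where
  Adj u v := ∃ k : ℕ, (u.val ^^^ v.val) = 2 ^ k
  symm := by
    constructor
    rintro u v ⟨k, h⟩
    exact ⟨k, by rwa [Nat.xor_comm]⟩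
  loopless := by
    constructor
    rintro u ⟨k, h⟩
    rw [Nat.xor_self] at h
    exact (pow_ne_zero k (two_ne_zero)) h.symm

noncomputable instance (n : ℕ) : DecidableRel (bricklayerGraph n).Adj :=
  Classical.decRel _

/-- `λ_n`: the principal (largest) eigenvalue of the adjacency matrix of `G_n` over ℝ. -/
noncomputable def bricklayerLambda (n : ℕ) : ℝ :=
  sSup (spectrum ℝ ((bricklayerGraph n).adjMatrix ℝ))

/-- `χ_n`: the characteristic polynomial `det (x·I - A)` of the adjacency matrix of `G_n`. -/
noncomputable def bricklayerCharpoly (n : ℕ) : Polynomial ℝ :=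
  ((bricklayerGraph n).adjMatrix ℝ).charpoly

namespace BrickAux

open Matrix Finset

/-! Auxiliary development: hypercube vertices as functions `Fin d → Fin 2`. -/

abbrev V (d : ℕ) := Fin d → Fin 2

variable {d : ℕ}

def z0 (d : ℕ) : V d := fun _ => 0

def wt (f : V d) : ℕ := ∑ k, (f k : ℕ)

def flipv (f : V d) (k : Fin d) : V d := Function.update f k (f k).rev

/-- The Hadamard-type eigenvector matrix of the hypercube. -/
noncomputable def Fm (d : ℕ) : Matrix (V d) (V d) ℝ :=
  Matrix.of fun f g => ∏ k, (-1 : ℝ) ^ ((f k : ℕ) * (g k : ℕ))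

open Classical in
/-- The adjacency matrix of the hypercube in function coordinates. -/
noncomputable def AQ (d : ℕ) : Matrix (V d) (V d) ℝ :=
  Matrix.of fun f g => if ∃ k, g = flipv f k then (1 : ℝ) else 0

/-! ### Fin 2 helpers -/

lemma fin2_rev_ne : ∀ a : Fin 2, a.rev ≠ a := by decide
lemma fin2_eq_of_decide : ∀ a b : Fin 2, (decide (a = 1) = decide (b = 1)) → a = b := by decide
lemma fin2_rev_of_ne : ∀ a b : Fin 2, a ≠ b → b = a.rev := by decide
lemma fin2_xor_rev : ∀ a : Fin 2, ((decide (a = 1)).xor (decide (a.rev = 1))) = true := by decide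
lemma fin2_eq_zero : ∀ a : Fin 2, a ≠ 1 → a = 0 := by decide

/-! ### Bits of the encoding -/

def bitf (f : V d) (j : ℕ) : Bool := if h : j < d then decide (f ⟨j, h⟩ = 1) else false

/-- Value of a hypercube vertex as a natural number. -/
def nv (f : V d) : ℕ := ((finFunctionFinEquiv f : Fin (2 ^ d)) : ℕ)

lemma nv_lt (f : V d) : nv f < 2 ^ d := (finFunctionFinEquiv f).isLt

lemma testBit_nv (f : V d) (j : ℕ) : (nv f).testBit j = bitf f j := by
  have key : ∀ (a : Fin (2 ^ d)) (b : Fin d),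
      ((finFunctionFinEquiv.symm a) b : ℕ) = (a : ℕ) / 2 ^ (b : ℕ) % 2 := fun a b => rfl
  by_cases h : j < d
  · have h1 : nv f / 2 ^ j % 2 = (f ⟨j, h⟩ : ℕ) := by
      have := key (finFunctionFinEquiv f) ⟨j, h⟩
      rw [Equiv.symm_apply_apply] at this
      exact this.symm
    rw [Nat.testBit_eq_decide_div_mod_eq, bitf, dif_pos h, h1]
    exact decide_eq_decide.mpr (by rw [Fin.ext_iff]; rfl)
  · rw [bitf, dif_neg h]
    exact Nat.testBit_eq_false_of_lt
      (lt_of_lt_of_le (nv_lt f) (Nat.pow_le_pow_right (by norm_num) (le_of_not_gt h)))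

lemma nv_z0 : nv (z0 d) = 0 := by
  simp [nv, finFunctionFinEquiv_apply, z0]

/-! ### Adjacency characterizations -/

lemma xor_char_inl (f g : V d) :
    (∃ k : ℕ, (nv f) ^^^ (nv g) = 2 ^ k) ↔ ∃ k : Fin d, g = flipv f k := by
  constructor
  · rintro ⟨k, hk⟩
    have Hb : ∀ j, ((bitf f j).xor (bitf g j)) = (2 ^ k).testBit j := by
      intro j
      rw [← testBit_nv f j, ← testBit_nv g j, ← Nat.testBit_xor, hk]
    have hkd : k < d := by
      by_contra hkd
      have h1 := Hb k
      rw [Nat.testBit_two_pow_self] at h1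
      simp [bitf, dif_neg hkd] at h1
    refine ⟨⟨k, hkd⟩, funext fun j => ?_⟩
    have h2 := Hb (j : ℕ)
    rw [bitf, bitf, dif_pos j.isLt, dif_pos j.isLt] at h2
    simp only [Fin.eta] at h2
    by_cases hj : (⟨k, hkd⟩ : Fin d) = j
    · subst hj
      rw [Nat.testBit_two_pow_self] at h2
      have hne : f ⟨k, hkd⟩ ≠ g ⟨k, hkd⟩ := by
        intro he
        rw [he, Bool.xor_self] at h2
        exact Bool.false_ne_true h2
      rw [flipv, Function.update_self]
      exact fin2_rev_of_ne _ _ hne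
    · have : k ≠ (j : ℕ) := fun he => hj (Fin.ext he)
      rw [Nat.testBit_two_pow_of_ne this] at h2
      have heq : f j = g j := fin2_eq_of_decide _ _ (by
        revert h2
        cases hb1 : decide (f j = 1) <;> cases hb2 : decide (g j = 1) <;> simp)
      rw [flipv, Function.update_of_ne (Ne.symm hj)]
      exact heq.symm
  · rintro ⟨k, rfl⟩
    refine ⟨k, Nat.eq_of_testBit_eq fun j => ?_⟩
    rw [Nat.testBit_xor, testBit_nv, testBit_nv]
    by_cases hj : j < d
    · rw [bitf, bitf, dif_pos hj, dif_pos hj]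
      by_cases hk : (⟨j, hj⟩ : Fin d) = k
      · subst hk
        rw [flipv, Function.update_self, Nat.testBit_two_pow_self]
        exact fin2_xor_rev _
      · rw [flipv, Function.update_of_ne hk, Bool.xor_self,
          Nat.testBit_two_pow_of_ne (fun he => hk (Fin.ext he.symm))]
    · rw [bitf, bitf, dif_neg hj, dif_neg hj, Bool.xor_self,
        Nat.testBit_two_pow_of_ne (show (k:ℕ) ≠ j from fun he => hj (he ▸ k.isLt))]

lemma xor_char_pend (f : V d) :
    (∃ k : ℕ, (nv f) ^^^ 2 ^ d = 2 ^ k) ↔ f = z0 d := by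
  constructor
  · rintro ⟨k, hk⟩
    have Hb : ∀ j, ((nv f).testBit j).xor ((2 ^ d).testBit j) = (2 ^ k).testBit j := by
      intro j; rw [← Nat.testBit_xor, hk]
    have hkd : k = d := by
      by_contra hkd
      have h1 := Hb d
      rw [testBit_nv, Nat.testBit_two_pow_self, Nat.testBit_two_pow_of_ne hkd] at h1
      simp [bitf] at h1
    funext j
    have hj : (j : ℕ) < d := j.isLt
    have h2 := Hb (j : ℕ)
    rw [hkd, testBit_nv, Nat.testBit_two_pow_of_ne (show d ≠ (j:ℕ) by omega),
      Bool.xor_false] at h2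
    rw [bitf, dif_pos hj] at h2
    simp only [Fin.eta] at h2
    exact fin2_eq_zero _ (by simpa using h2)
  · rintro rfl
    exact ⟨d, by rw [nv_z0, Nat.zero_xor]⟩


/-! ### The Hadamard matrix lemmas -/

lemma Fm_apply (f g : V d) : Fm d f g = ∏ k, (-1:ℝ)^((f k : ℕ) * (g k : ℕ)) := rfl

lemma Fm_z0_right (f : V d) : Fm d f (z0 d) = 1 := by
  simp [Fm, z0]

lemma Fm_z0_left (g : V d) : Fm d (z0 d) g = 1 := by simp [Fm, z0]

lemma fin2_sum_orth (a b : Fin 2) :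
    ∑ c : Fin 2, ((-1:ℝ)^((a:ℕ)*(c:ℕ)) * (-1:ℝ)^((c:ℕ)*(b:ℕ)))
      = if a = b then 2 else 0 := by
  fin_cases a <;> fin_cases b <;> norm_num [Fin.sum_univ_two]

set_option maxHeartbeats 1000000 in
lemma Fm_mul_Fm : Fm d * Fm d = (2^d : ℝ) • 1 := by
  ext f g
  rw [Matrix.mul_apply]
  calc ∑ h : V d, Fm d f h * Fm d h g
      = ∑ h ∈ Fintype.piFinset (fun _ : Fin d => (univ : Finset (Fin 2))),
          ∏ k, ((-1:ℝ)^((f k:ℕ)*(h k:ℕ)) * (-1:ℝ)^((h k:ℕ)*(g k:ℕ))) := by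
        rw [Fintype.piFinset_univ]
        exact Finset.sum_congr rfl fun h _ => by
          rw [Fm_apply, Fm_apply, ← Finset.prod_mul_distrib]
    _ = ∏ k, ∑ c : Fin 2, ((-1:ℝ)^((f k:ℕ)*(c:ℕ)) * (-1:ℝ)^((c:ℕ)*(g k:ℕ))) :=
        (Finset.prod_univ_sum (fun _ : Fin d => (univ : Finset (Fin 2)))
          (fun k c => (-1:ℝ)^((f k:ℕ)*(c:ℕ)) * (-1:ℝ)^((c:ℕ)*(g k:ℕ)))).symm
    _ = ∏ k, if f k = g k then (2:ℝ) else 0 :=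
        Finset.prod_congr rfl fun k _ => fin2_sum_orth (f k) (g k)
    _ = ((2^d : ℝ) • (1 : Matrix (V d) (V d) ℝ)) f g := by
        by_cases hfg : f = g
        · subst hfg
          simp [Matrix.one_apply, Finset.prod_const, card_univ]
        · obtain ⟨k, hk⟩ := Function.ne_iff.mp hfg
          have hz : (∏ k : Fin d, if f k = g k then (2:ℝ) else 0) = 0 :=
            Finset.prod_eq_zero (Finset.mem_univ k) (if_neg hk)
          rw [hz]
          simp [Matrix.one_apply, hfg]

lemma det_Fm_ne_zero : (Fm d).det ≠ 0 := by
  intro h0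
  have h : (Fm d).det * (Fm d).det = (2^d : ℝ)^(Fintype.card (V d)) := by
    rw [← Matrix.det_mul, Fm_mul_Fm, Matrix.det_smul, Matrix.det_one, mul_one]
  rw [h0, mul_zero] at h
  exact (pow_ne_zero _ (by positivity : (2^d : ℝ) ≠ 0)) h.symm

/-! ### Eigenvector relation -/

lemma flipv_inj (f : V d) {k k' : Fin d} (h : flipv f k = flipv f k') : k = k' := by
  by_contra hne
  have h1 := congrFun h k
  rw [flipv, flipv, Function.update_self, Function.update_of_ne hne] at h1
  exact fin2_rev_ne _ h1

lemma AQ_apply_sum (f g : V d) :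
    AQ d f g = ∑ k : Fin d, if g = flipv f k then (1:ℝ) else 0 := by
  classical
  rw [AQ]
  simp only [Matrix.of_apply]
  by_cases h : ∃ k, g = flipv f k
  · obtain ⟨k0, hk0⟩ := h
    rw [if_pos ⟨k0, hk0⟩, Finset.sum_eq_single k0 (fun k _ hk => ?_) (fun h => ?_)]
    · rw [if_pos hk0]
    · rw [if_neg]
      intro hgk
      exact hk (flipv_inj f (hgk.symm.trans hk0).symm).symm
    · exact absurd (Finset.mem_univ k0) h
  · rw [if_neg h, Finset.sum_eq_zero]
    intro k _
    rw [if_neg (fun hh => h ⟨k, hh⟩)]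

lemma Fm_flip (f : V d) (k : Fin d) (S : V d) :
    Fm d (flipv f k) S = (if S k = 1 then (-1:ℝ) else 1) * Fm d f S := by
  have tail : ∏ j ∈ univ.erase k, (-1:ℝ)^(((flipv f k) j:ℕ)*(S j:ℕ))
      = ∏ j ∈ univ.erase k, (-1:ℝ)^((f j:ℕ)*(S j:ℕ)) :=
    Finset.prod_congr rfl fun j hj => by
      rw [flipv, Function.update_of_ne (Finset.ne_of_mem_erase hj)]
  have head : (-1:ℝ)^(((flipv f k) k:ℕ)*(S k:ℕ))
      = (if S k = 1 then (-1:ℝ) else 1) * (-1:ℝ)^((f k:ℕ)*(S k:ℕ)) := by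
    rw [flipv, Function.update_self]
    have key : ∀ a b : Fin 2,
        (-1:ℝ)^((a.rev:ℕ)*(b:ℕ)) = (if b = 1 then (-1:ℝ) else 1) * (-1:ℝ)^((a:ℕ)*(b:ℕ)) := by
      intro a b; fin_cases a <;> fin_cases b <;> norm_num
    exact key (f k) (S k)
  rw [Fm_apply, Fm_apply, ← Finset.mul_prod_erase univ _ (Finset.mem_univ k),
    ← Finset.mul_prod_erase univ (fun j => (-1:ℝ)^((f j:ℕ)*(S j:ℕ))) (Finset.mem_univ k),
    tail, head]
  ring

lemma wt_cast (S : V d) : ((wt S : ℝ)) = ∑ k, ((S k : ℕ) : ℝ) := by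
  rw [wt]; push_cast; ring

lemma sign_sum (S : V d) :
    ∑ k : Fin d, (if S k = 1 then (-1:ℝ) else 1) = (d : ℝ) - 2 * (wt S : ℝ) := by
  have key : ∀ a : Fin 2, (if a = 1 then (-1:ℝ) else 1) = 1 - 2*((a:ℕ):ℝ) := by
    intro a; fin_cases a <;> norm_num
  calc ∑ k, (if S k = 1 then (-1:ℝ) else 1) = ∑ k : Fin d, (1 - 2*((S k:ℕ):ℝ)) :=
        Finset.sum_congr rfl fun k _ => key (S k)
    _ = (d:ℝ) - 2*(wt S:ℝ) := by
        rw [Finset.sum_sub_distrib, Finset.sum_const, card_univ, Fintype.card_fin,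
          ← Finset.mul_sum, wt_cast]
        simp

lemma AQ_mul_Fm : AQ d * Fm d = Fm d * Matrix.diagonal (fun S => (d:ℝ) - 2*(wt S:ℝ)) := by
  ext f S
  rw [Matrix.mul_apply, Matrix.mul_diagonal]
  calc ∑ g, AQ d f g * Fm d g S
      = ∑ g, ∑ k : Fin d, (if g = flipv f k then (1:ℝ) else 0) * Fm d g S :=
        Finset.sum_congr rfl fun g _ => by rw [AQ_apply_sum, Finset.sum_mul]
    _ = ∑ k : Fin d, ∑ g, (if g = flipv f k then (1:ℝ) else 0) * Fm d g S := Finset.sum_comm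
    _ = ∑ k : Fin d, Fm d (flipv f k) S := by
        refine Finset.sum_congr rfl fun k _ => ?_
        simp [ite_mul]
    _ = (∑ k : Fin d, (if S k = 1 then (-1:ℝ) else 1)) * Fm d f S := by
        rw [Finset.sum_mul]
        exact Finset.sum_congr rfl fun k _ => Fm_flip f k S
    _ = Fm d f S * ((d:ℝ) - 2*(wt S:ℝ)) := by rw [sign_sum, mul_comm]

/-- The weight diagonal. -/
noncomputable def Dv (d : ℕ) : V d → ℝ := fun g => 2 * (wt g : ℝ)

lemma wt_z0 : wt (z0 d) = 0 := by simp [wt, z0]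

lemma Dv_z0 : Dv d (z0 d) = 0 := by simp [Dv, wt_z0]

lemma X_mul_Fm :
    (((d:ℝ) • 1 - AQ d) * Fm d : Matrix (V d) (V d) ℝ) = Fm d * Matrix.diagonal (Dv d) := by
  rw [Matrix.sub_mul, Matrix.smul_mul, Matrix.one_mul, AQ_mul_Fm]
  ext f S
  rw [Matrix.sub_apply, Matrix.mul_diagonal, Matrix.mul_diagonal, Matrix.smul_apply]
  simp only [Dv, smul_eq_mul]
  ring


/-! ### Vertex equivalence and block identification -/

def eqv (d : ℕ) : (V d ⊕ Fin 1) ≃ Fin (2^d + 1) :=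
  (Equiv.sumCongr finFunctionFinEquiv (Equiv.refl (Fin 1))).trans finSumFinEquiv

lemma eqv_inl_val (f : V d) : ((eqv d (Sum.inl f)) : ℕ) = nv f := by
  simp [eqv, nv]

lemma eqv_inr_val (i : Fin 1) : ((eqv d (Sum.inr i)) : ℕ) = 2^d := by
  have hi : i = 0 := Subsingleton.elim _ _
  subst hi
  simp [eqv]

lemma not_self_flip (f : V d) : ¬ ∃ k, f = flipv f k := by
  rintro ⟨k, hk⟩
  have h := congrFun hk k
  rw [flipv, Function.update_self] at h
  exact fin2_rev_ne _ h.symm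

lemma adj_iff_inl_inl (f g : V d) :
    (bricklayerGraph (2^d+1)).Adj (eqv d (Sum.inl f)) (eqv d (Sum.inl g)) ↔
      ∃ k : Fin d, g = flipv f k := by
  have h0 : (bricklayerGraph (2^d+1)).Adj (eqv d (Sum.inl f)) (eqv d (Sum.inl g)) ↔
      ∃ k : ℕ, (((eqv d (Sum.inl f)) : ℕ) ^^^ ((eqv d (Sum.inl g)) : ℕ)) = 2^k := Iff.rfl
  rw [h0, eqv_inl_val, eqv_inl_val]
  exact xor_char_inl f g

lemma adj_iff_inl_inr (f : V d) (i : Fin 1) :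
    (bricklayerGraph (2^d+1)).Adj (eqv d (Sum.inl f)) (eqv d (Sum.inr i)) ↔ f = z0 d := by
  have h0 : (bricklayerGraph (2^d+1)).Adj (eqv d (Sum.inl f)) (eqv d (Sum.inr i)) ↔
      ∃ k : ℕ, (((eqv d (Sum.inl f)) : ℕ) ^^^ ((eqv d (Sum.inr i)) : ℕ)) = 2^k := Iff.rfl
  rw [h0, eqv_inl_val, eqv_inr_val]
  exact xor_char_pend f

lemma adj_iff_inr_inl (i : Fin 1) (g : V d) :
    (bricklayerGraph (2^d+1)).Adj (eqv d (Sum.inr i)) (eqv d (Sum.inl g)) ↔ g = z0 d := by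
  rw [SimpleGraph.adj_comm]
  exact adj_iff_inl_inr g i

noncomputable def Bc (d : ℕ) : Matrix (V d) (Fin 1) ℝ :=
  Matrix.of fun f _ => -(if f = z0 d then (1:ℝ) else 0)
noncomputable def Cc (d : ℕ) : Matrix (Fin 1) (V d) ℝ :=
  Matrix.of fun _ g => -(if g = z0 d then (1:ℝ) else 0)
noncomputable def Dd (d : ℕ) : Matrix (Fin 1) (Fin 1) ℝ := Matrix.of fun _ _ => (d:ℝ)

set_option maxHeartbeats 1000000 in
lemma reindexed :
    (((d:ℝ) • (1 : Matrix (Fin (2^d+1)) (Fin (2^d+1)) ℝ)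
        - (bricklayerGraph (2^d+1)).adjMatrix ℝ).submatrix (eqv d) (eqv d))
      = Matrix.fromBlocks ((d:ℝ) • 1 - AQ d) (Bc d) (Cc d) (Dd d) := by
  ext i j
  cases i with
  | inl f =>
    cases j with
    | inl g =>
      by_cases hfg : f = g <;> by_cases hA : ∃ k : Fin d, g = flipv f k <;>
        simp [Matrix.sub_apply, Matrix.one_apply, SimpleGraph.adjMatrix_apply,
          adj_iff_inl_inl, AQ, hfg, hA, not_self_flip, EmbeddingLike.apply_eq_iff_eq]
    | inr i =>
      simp [Matrix.sub_apply, Matrix.one_apply, SimpleGraph.adjMatrix_apply,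
        adj_iff_inl_inr, Bc, EmbeddingLike.apply_eq_iff_eq]
  | inr i =>
    cases j with
    | inl g =>
      simp [Matrix.sub_apply, Matrix.one_apply, SimpleGraph.adjMatrix_apply,
        adj_iff_inr_inl, Cc, EmbeddingLike.apply_eq_iff_eq]
    | inr i' =>
      have hi : i = i' := Subsingleton.elim _ _
      subst hi
      simp [Matrix.sub_apply, Matrix.one_apply, SimpleGraph.adjMatrix_apply,
        SimpleGraph.irrefl, Dd, EmbeddingLike.apply_eq_iff_eq]

/-! ### Determinant computation -/

lemma CcFm : Cc d * Fm d = Matrix.of (fun (_ : Fin 1) (_ : V d) => (-1:ℝ)) := by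
  ext i S
  rw [Matrix.mul_apply]
  have h1 : ∀ g : V d, Cc d i g * Fm d g S
      = (if g = z0 d then -Fm d g S else 0) := by
    intro g; by_cases h : g = z0 d <;> simp [Cc, h]
  rw [Finset.sum_congr rfl fun g _ => h1 g,
    Finset.sum_ite_eq' univ (z0 d) (fun g => -Fm d g S)]
  simp [Fm_z0_left]

noncomputable def Uc (d : ℕ) : Matrix (V d) (V d) ℝ :=
  (Matrix.diagonal (Dv d)).updateCol (z0 d) (fun _ => -((2^d:ℝ))⁻¹)

lemma Fm_mul_Uc :
    Fm d * Uc d = (Fm d * Matrix.diagonal (Dv d)).updateCol (z0 d)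
      (fun f => -(if f = z0 d then (1:ℝ) else 0)) := by
  ext f S
  by_cases hS : S = z0 d
  · subst hS
    rw [Matrix.updateCol_self, Matrix.mul_apply]
    have h1 : ∀ h : V d, Fm d f h * Uc d h (z0 d)
        = Fm d f h * Fm d h (z0 d) * (-((2^d:ℝ))⁻¹) := by
      intro h; rw [Uc, Matrix.updateCol_self, Fm_z0_right]; ring
    rw [Finset.sum_congr rfl fun h _ => h1 h, ← Finset.sum_mul]
    have h2 : ∑ h : V d, Fm d f h * Fm d h (z0 d) = (Fm d * Fm d) f (z0 d) :=
      (Matrix.mul_apply).symm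
    rw [h2, Fm_mul_Fm]
    by_cases hf : f = z0 d <;>
      simp [Matrix.smul_apply, Matrix.one_apply, hf]
  · rw [Matrix.updateCol_ne hS, Matrix.mul_apply, Matrix.mul_apply]
    exact Finset.sum_congr rfl fun h _ => by rw [Uc, Matrix.updateCol_ne hS]

lemma det_Uc : (Uc d).det = -((2^d:ℝ))⁻¹ * ∏ g ∈ univ.erase (z0 d), Dv d g := by
  have h := Matrix.cramer_apply (A := Matrix.diagonal (Dv d))
    (b := fun _ => -((2^d:ℝ))⁻¹) (z0 d)
  rw [Uc, ← h, Matrix.cramer_eq_adjugate_mulVec, Matrix.adjugate_diagonal,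
    Matrix.mulVec_diagonal]
  ring

lemma det_N0 :
    (Matrix.fromBlocks (Fm d * Matrix.diagonal (Dv d)) (Bc d)
      (Matrix.of (fun (_ : Fin 1) (_ : V d) => (-1:ℝ))) (Dd d)).det
    = (Fm d).det * (Uc d).det := by
  set σ : Equiv.Perm (V d ⊕ Fin 1) := Equiv.swap (Sum.inl (z0 d)) (Sum.inr (0 : Fin 1)) with hσ
  set N : Matrix (V d ⊕ Fin 1) (V d ⊕ Fin 1) ℝ :=
    Matrix.fromBlocks (Fm d * Matrix.diagonal (Dv d)) (Bc d)
      (Matrix.of (fun (_ : Fin 1) (_ : V d) => (-1:ℝ))) (Dd d) with hN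
  have hswap : (N.submatrix id σ).det = -N.det := by
    rw [Matrix.det_permute' σ N, hσ, Equiv.Perm.sign_swap (by simp)]
    push_cast
    ring
  have hN' : N.submatrix id σ = Matrix.fromBlocks (Fm d * Uc d) 0
      (Matrix.of fun (_ : Fin 1) (g : V d) => if g = z0 d then (d:ℝ) else -1)
      (Matrix.of fun (_ : Fin 1) (_ : Fin 1) => (-1:ℝ)) := by
    rw [Fm_mul_Uc]
    ext i j
    cases i with
    | inl f =>
      cases j with
      | inl S =>
        by_cases hS : S = z0 d
        · subst hS
          simp [hN, hσ, Matrix.submatrix_apply, Equiv.swap_apply_left, Bc,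
            Matrix.updateCol_self]
        · have hx : σ (Sum.inl S) = Sum.inl S :=
            Equiv.swap_apply_of_ne_of_ne (by simp [hS]) (by simp)
          simp [hN, Matrix.submatrix_apply, hx, Matrix.updateCol_ne hS]
      | inr i =>
        have hi : i = 0 := Subsingleton.elim _ _
        subst hi
        simp [hN, hσ, Matrix.submatrix_apply, Equiv.swap_apply_right,
          Matrix.mul_diagonal, Dv_z0]
    | inr i =>
      cases j with
      | inl S =>
        by_cases hS : S = z0 d
        · subst hS
          have hi : i = 0 := Subsingleton.elim _ _
          subst hi
          simp [hN, hσ, Matrix.submatrix_apply, Equiv.swap_apply_left, Dd]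
        · have hx : σ (Sum.inl S) = Sum.inl S :=
            Equiv.swap_apply_of_ne_of_ne (by simp [hS]) (by simp)
          simp [hN, Matrix.submatrix_apply, hx, hS]
      | inr i' =>
        have hi : i' = 0 := Subsingleton.elim _ _
        subst hi
        simp [hN, hσ, Matrix.submatrix_apply, Equiv.swap_apply_right]
  have hdetN' : (N.submatrix id σ).det = ((Fm d * Uc d).det) * (-1 : ℝ) := by
    rw [hN', Matrix.det_fromBlocks_zero₁₂]
    congr 1
    rw [Matrix.det_fin_one]
    rfl
  have := hswap.symm.trans hdetN'
  rw [Matrix.det_mul] at this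
  linarith [this]

set_option maxHeartbeats 1000000 in
lemma det_main :
    ((d:ℝ) • (1 : Matrix (Fin (2^d+1)) (Fin (2^d+1)) ℝ)
        - (bricklayerGraph (2^d+1)).adjMatrix ℝ).det
      = -((2^d:ℝ))⁻¹ * ∏ g ∈ univ.erase (z0 d), Dv d g := by
  rw [← Matrix.det_submatrix_equiv_self (eqv d), reindexed]
  have hMP : (Matrix.fromBlocks ((d:ℝ) • 1 - AQ d) (Bc d) (Cc d) (Dd d)) *
      (Matrix.fromBlocks (Fm d) (0 : Matrix (V d) (Fin 1) ℝ)
        (0 : Matrix (Fin 1) (V d) ℝ) (1 : Matrix (Fin 1) (Fin 1) ℝ))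
      = Matrix.fromBlocks (Fm d * Matrix.diagonal (Dv d)) (Bc d)
        (Matrix.of (fun (_ : Fin 1) (_ : V d) => (-1:ℝ))) (Dd d) := by
    rw [Matrix.fromBlocks_multiply]
    rw [show (((d:ℝ) • 1 - AQ d) * Fm d : Matrix (V d) (V d) ℝ)
        = Fm d * Matrix.diagonal (Dv d) from X_mul_Fm, CcFm]
    simp [Matrix.mul_zero, Matrix.zero_mul, Matrix.mul_one]
  have hdetP : (Matrix.fromBlocks (Fm d) (0 : Matrix (V d) (Fin 1) ℝ)
      (0 : Matrix (Fin 1) (V d) ℝ) (1 : Matrix (Fin 1) (Fin 1) ℝ)).det = (Fm d).det := by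
    rw [Matrix.det_fromBlocks_zero₁₂, Matrix.det_one, mul_one]
  have key := congrArg Matrix.det hMP
  rw [Matrix.det_mul, hdetP, det_N0] at key
  have key2 : (Matrix.fromBlocks ((d:ℝ) • 1 - AQ d) (Bc d) (Cc d) (Dd d)).det * (Fm d).det
      = (Uc d).det * (Fm d).det := by rw [key]; ring
  rw [mul_right_cancel₀ det_Fm_ne_zero key2, det_Uc]

/-! ### Counting -/

lemma wt_card (g : V d) : wt g = (univ.filter (fun k => g k = 1)).card := by
  rw [Finset.card_filter, wt]
  have key : ∀ a : Fin 2, (a:ℕ) = if a = 1 then 1 else 0 := by decide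
  exact Finset.sum_congr rfl fun k _ => key (g k)

lemma fin2_eq_of_iff : ∀ a b : Fin 2, ((a = 1) ↔ (b = 1)) → a = b := by decide

lemma card_wt_fiber {i : ℕ} (hi : 1 ≤ i) :
    ((univ.erase (z0 d)).filter (fun g => wt g = i)).card = d.choose i := by
  have h1 : (univ.erase (z0 d)).filter (fun g => wt g = i)
      = univ.filter (fun g : V d => wt g = i) := by
    ext g
    simp only [Finset.mem_filter, Finset.mem_erase, Finset.mem_univ, true_and, and_true]
    constructor
    · rintro ⟨_, h3⟩; exact h3
    · intro h3
      refine ⟨?_, h3⟩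
      intro hz
      subst hz
      rw [wt_z0] at h3
      omega
  rw [h1]
  have h2 : (univ.filter (fun g : V d => wt g = i)).card
      = (Finset.powersetCard i (univ : Finset (Fin d))).card := by
    apply Finset.card_bij (fun g _ => univ.filter (fun k => g k = 1))
    · intro g hg
      rw [Finset.mem_powersetCard_univ, ← wt_card]
      exact (Finset.mem_filter.mp hg).2
    · intro g1 h1' g2 h2' heq
      funext k
      have hk := Finset.ext_iff.mp heq k
      simp only [Finset.mem_filter, Finset.mem_univ, true_and] at hk
      exact fin2_eq_of_iff _ _ hk
    · intro s hs
      refine ⟨fun k => if k ∈ s then 1 else 0, ?_, ?_⟩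
      · rw [Finset.mem_filter]
        refine ⟨Finset.mem_univ _, ?_⟩
        rw [wt_card]
        rw [← Finset.mem_powersetCard_univ.mp hs]
        congr 1
        ext k
        simp only [Finset.mem_filter, Finset.mem_univ, true_and]
        by_cases hk : k ∈ s <;> simp [hk]
      · ext k
        simp only [Finset.mem_filter, Finset.mem_univ, true_and]
        by_cases hk : k ∈ s <;> simp [hk]
  rw [h2, Finset.card_powersetCard, Finset.card_univ, Fintype.card_fin]

lemma prod_erase_eq :
    ∏ g ∈ univ.erase (z0 d), Dv d g = ∏ i ∈ Finset.Icc 1 d, (2*(i:ℝ))^(d.choose i) := by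
  have hmaps : ∀ g ∈ univ.erase (z0 d), wt g ∈ Finset.Icc 1 d := by
    intro g hg
    rw [Finset.mem_Icc]
    constructor
    · by_contra h
      push_neg at h
      have h0 : wt g = 0 := by omega
      have hgz : g = z0 d := by
        funext k
        have hk := (Finset.sum_eq_zero_iff).mp h0 k (Finset.mem_univ k)
        simpa [z0] using hk
      exact (Finset.mem_erase.mp hg).1 hgz
    · calc wt g = ∑ k, (g k : ℕ) := rfl
        _ ≤ ∑ _k : Fin d, 1 := Finset.sum_le_sum fun k _ => Fin.is_le (g k)
        _ = d := by simp
  have hfib := Finset.prod_fiberwise_of_maps_to' hmaps (fun i => 2*(i:ℝ))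
  calc ∏ g ∈ univ.erase (z0 d), Dv d g
      = ∏ g ∈ univ.erase (z0 d), (fun i : ℕ => 2*(i:ℝ)) (wt g) :=
        Finset.prod_congr rfl fun g _ => rfl
    _ = ∏ j ∈ Finset.Icc 1 d, ∏ g ∈ (univ.erase (z0 d)).filter (fun g => wt g = j),
          2*(j:ℝ) := hfib.symm
    _ = ∏ j ∈ Finset.Icc 1 d, (2*(j:ℝ))^(d.choose j) := by
        refine Finset.prod_congr rfl fun j hj => ?_
        rw [Finset.prod_const, card_wt_fiber (Finset.mem_Icc.mp hj).1]



end BrickAux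

/-- `χ_{2^d + 1}(d) = -d! · ∏_{i=1}^{d-1} (2i)^{C(d,i) - 1}`. -/
theorem bricklayer_charpoly_add_one_eval (d : ℕ) (hd : 1 ≤ d) :
    (bricklayerCharpoly (2 ^ d + 1)).eval (d : ℝ) =
      -(d.factorial : ℝ) *
        ∏ i ∈ Finset.Icc 1 (d - 1), ((2 * i : ℝ)) ^ (d.choose i - 1) := by
  classical
  have heval : (bricklayerCharpoly (2^d+1)).eval (d:ℝ)
      = ((d:ℝ) • (1 : Matrix (Fin (2^d+1)) (Fin (2^d+1)) ℝ)
          - (bricklayerGraph (2^d+1)).adjMatrix ℝ).det := by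
    rw [bricklayerCharpoly, Matrix.charpoly, ← Polynomial.coe_evalRingHom, RingHom.map_det]
    congr 1
    ext i j
    by_cases h : i = j <;>
      simp [Matrix.charmatrix_apply, h, Matrix.one_apply, Matrix.diagonal_apply,
        Matrix.sub_apply, apply_ite (Polynomial.eval ((d:ℕ):ℝ))]
  rw [heval, BrickAux.det_main, BrickAux.prod_erase_eq]
  have hsplit : Finset.Icc 1 d = insert d (Finset.Icc 1 (d-1)) := by
    ext x
    simp only [Finset.mem_Icc, Finset.mem_insert]
    omega
  rw [hsplit, Finset.prod_insert (by simp only [Finset.mem_Icc]; omega)]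
  have hpow : ∀ i ∈ Finset.Icc 1 (d-1), (2*(i:ℝ))^(d.choose i)
      = (2*(i:ℝ))^(d.choose i - 1) * (2*(i:ℝ)) := by
    intro i hi
    rw [← pow_succ]
    congr 1
    have hle := Finset.mem_Icc.mp hi
    have hcp := Nat.choose_pos (show i ≤ d by omega)
    omega
  rw [Finset.prod_congr rfl hpow, Finset.prod_mul_distrib]
  have hfac : ∏ i ∈ Finset.Icc 1 (d-1), (2*(i:ℝ)) = 2^(d-1) * ((d-1).factorial : ℝ) := by
    have hc : ∏ x ∈ Finset.Icc 1 (d-1), (x:ℝ) = ((d-1).factorial : ℝ) := by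
      rw [← Nat.cast_prod, ← Finset.Ico_add_one_right_eq_Icc, Finset.prod_Ico_id_eq_factorial]
    rw [Finset.prod_mul_distrib, Finset.prod_const, Nat.card_Icc, hc]
    norm_num
  rw [hfac, Nat.choose_self, pow_one]
  rw [show d.factorial = d * (d-1).factorial from (Nat.mul_factorial_pred (by omega)).symm]
  have h2d : (2:ℝ)^d = 2 * 2^(d-1) := by
    rw [← pow_succ']
    congr 1
    omega
  rw [h2d]
  have hne : (2:ℝ)^(d-1) ≠ 0 := by positivity
  push_cast
  field_simp
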